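/- The product weakly dominates every ie-merging function: if F is an ie-merging function and (e₁,…,e_K) ∈ [1,∞)^K, then F(e₁,…,e_K) ≤ e₁⋯e_K. -/

import Mathlib

open MeasureTheory ProbabilityTheory
open scoped ENNReal NNReal BigOperators

/-- An ie-merging function: an increasing Borel function `F : [0,∞)^K → [0,∞)` such that
`E[F(E₁,…,E_K)] ≤ 1` for all independent nonnegative random variables `E₁,…,E_K`
each with expectation at most 1, on any probability space. -/
def IsIEMerging (K : ℕ) (F : (Fin K → ℝ) → ℝ) : Prop :=
  Monotone F ∧ Measurable F ∧ (∀ e, 0 ≤ F e) ∧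
  ∀ (Ω : Type) [MeasurableSpace Ω] (Q : Measure Ω), IsProbabilityMeasure Q →
    ∀ E : Fin K → Ω → ℝ, (∀ k, Measurable (E k)) → (∀ k ω, 0 ≤ E k ω) →
      iIndepFun E Q →
      (∀ k, ∫⁻ ω, ENNReal.ofReal (E k ω) ∂Q ≤ 1) →
      ∫⁻ ω, ENNReal.ofReal (F (fun k => E k ω)) ∂Q ≤ 1

section Aux

variable {K : ℕ}

/-- measure of a preimage of a coordinate under a pi measure of probability measures -/
lemma pi_eval_preimage (μ : Fin K → Measure ℝ) [∀ k, IsProbabilityMeasure (μ k)]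
    (k : Fin K) (s : Set ℝ) (hs : MeasurableSet s) :
    Measure.pi μ (Function.eval k ⁻¹' s) = μ k s := by
  rw [← Set.univ_pi_update_univ, Measure.pi_pi]
  rw [Finset.prod_eq_single k]
  · simp
  · intro j _ hj
    simp [Function.update_of_ne hj]
  · simp

lemma iIndepFun_eval (μ : Fin K → Measure ℝ) [∀ k, IsProbabilityMeasure (μ k)] :
    iIndepFun (fun k (ω : Fin K → ℝ) => ω k) (Measure.pi μ) := by
  rw [iIndepFun_iff_measure_inter_preimage_eq_mul]
  intro S sets hsets
  have h1 : (⋂ i ∈ S, (fun ω : Fin K → ℝ => ω i) ⁻¹' sets i)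
      = Set.pi Set.univ (fun i => if i ∈ S then sets i else Set.univ) := by
    ext ω
    simp only [Set.mem_iInter, Set.mem_preimage, Set.mem_pi, Set.mem_univ, true_imp_iff]
    constructor
    · intro h i
      by_cases hi : i ∈ S <;> simp [hi, h i]
    · intro h i hi
      have := h i
      simpa [hi] using this
  rw [h1, Measure.pi_pi]
  have h2 : ∀ i, μ i (if i ∈ S then sets i else Set.univ)
      = if i ∈ S then μ i (sets i) else 1 := by
    intro i; by_cases hi : i ∈ S <;> simp [hi]
  simp_rw [h2]
  rw [Finset.prod_ite_mem Finset.univ S, Finset.univ_inter]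
  refine Finset.prod_congr rfl fun i hi => ?_
  exact (pi_eval_preimage μ i (sets i) (hsets i hi)).symm

end Aux

/-- the product weakly dominates every ie-merging function: if `F` is an
ie-merging function and `e ∈ [1,∞)^K`, then `F(e) ≤ e₁⋯e_K`. -/
theorem product_weakly_dominates
    (K : ℕ) (F : (Fin K → ℝ) → ℝ) (hF : IsIEMerging K F) :
    ∀ e : Fin K → ℝ, (∀ k, 1 ≤ e k) → F e ≤ ∏ k, e k := by
  intro e he
  obtain ⟨hmono, hmeas, hpos, hint⟩ := hF
  have hepos : ∀ k, (0:ℝ) < e k := fun k => lt_of_lt_of_le one_pos (he k)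
  set p : Fin K → ℝ≥0∞ := fun k => ENNReal.ofReal (e k)⁻¹ with hp
  have hp1 : ∀ k, p k ≤ 1 := by
    intro k
    rw [hp]
    have h1 : (e k)⁻¹ ≤ 1 := by
      rw [inv_le_one₀ (hepos k)]
      exact he k
    simpa using ENNReal.ofReal_le_one.2 h1
  set μ : Fin K → Measure ℝ := fun k =>
    p k • Measure.dirac (e k) + (1 - p k) • Measure.dirac 0 with hμ
  have hprob : ∀ k, IsProbabilityMeasure (μ k) := by
    intro k
    constructor
    rw [hμ]
    simp only [Measure.add_apply, Measure.smul_apply, smul_eq_mul, Measure.dirac_apply_of_mem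
      (Set.mem_univ _), mul_one]
    rw [add_comm]
    exact tsub_add_cancel_of_le (hp1 k)
  have hμsingleton : ∀ k, μ k {e k} = p k := by
    intro k
    rw [hμ]
    have h0 : (0:ℝ) ∉ ({e k} : Set ℝ) := by
      simp only [Set.mem_singleton_iff]
      exact fun h => absurd h.symm (ne_of_gt (hepos k))
    simp [Measure.dirac_apply' _ (measurableSet_singleton _), Set.indicator_of_notMem h0,
      Pi.single_apply, (hepos k).ne, (hepos k).ne']
  set ν := Measure.pi μ with hν
  haveI : ∀ k, IsProbabilityMeasure (μ k) := hprob
  haveI : IsProbabilityMeasure ν := by rw [hν]; infer_instance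
  set E : Fin K → (Fin K → ℝ) → ℝ := fun k ω => max (ω k) 0 with hE
  have hEmeas : ∀ k, Measurable (E k) := fun k =>
    (measurable_pi_apply k).max measurable_const
  have hEnn : ∀ k ω, 0 ≤ E k ω := fun k ω => le_max_right _ _
  have hindep : iIndepFun E ν := by
    have h := (iIndepFun_eval μ).comp (fun _ x => max x 0)
      (fun _ => measurable_id.max measurable_const)
    exact h
  have hexp : ∀ k, ∫⁻ ω, ENNReal.ofReal (E k ω) ∂ν ≤ 1 := by
    intro k
    have hae : ∀ᵐ ω ∂ν, ω k = 0 ∨ ω k = e k := by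
      have hnull : μ k {x : ℝ | ¬ (x = 0 ∨ x = e k)} = 0 := by
        have hsub : {x : ℝ | ¬ (x = 0 ∨ x = e k)} ⊆ ({e k} : Set ℝ)ᶜ ∩ ({0} : Set ℝ)ᶜ := by
          intro x hx
          push_neg at hx
          exact ⟨hx.2, hx.1⟩
        refine measure_mono_null hsub ?_
        rw [hμ]
        simp only [Measure.add_apply, Measure.smul_apply, smul_eq_mul]
        rw [Measure.dirac_apply' _ ((measurableSet_singleton (e k)).compl.inter
          (measurableSet_singleton 0).compl),
          Measure.dirac_apply' _ ((measurableSet_singleton (e k)).compl.inter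
          (measurableSet_singleton 0).compl)]
        have h1 : e k ∉ ({e k} : Set ℝ)ᶜ ∩ ({0} : Set ℝ)ᶜ := by simp
        have h2 : (0:ℝ) ∉ ({e k} : Set ℝ)ᶜ ∩ ({0} : Set ℝ)ᶜ := by simp
        simp [Set.indicator_of_notMem h1, Set.indicator_of_notMem h2]
      rw [ae_iff]
      have hset : {ω : Fin K → ℝ | ¬ (ω k = 0 ∨ ω k = e k)}
          = Function.eval k ⁻¹' {x : ℝ | ¬ (x = 0 ∨ x = e k)} := rfl
      rw [hset, hν]
      exact Measure.pi_eval_preimage_null μ hnull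
    set Sk : Set (Fin K → ℝ) := (fun ω : Fin K → ℝ => ω k) ⁻¹' ({e k} : Set ℝ) with hSk
    calc ∫⁻ ω, ENNReal.ofReal (E k ω) ∂ν
        = ∫⁻ ω, Set.indicator Sk (fun _ => ENNReal.ofReal (e k)) ω ∂ν := by
          refine lintegral_congr_ae ?_
          filter_upwards [hae] with ω hω
          rcases hω with h0 | hek
          · rw [hE]
            simp only
            rw [h0, max_self, ENNReal.ofReal_zero, Set.indicator_of_notMem]
            rw [hSk]
            simp only [Set.mem_preimage, Set.mem_singleton_iff]
            rw [h0]
            exact fun h => absurd h.symm (ne_of_gt (hepos k))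
          · have hmem : ω ∈ Sk := by
              rw [hSk]
              simp [hek]
            rw [hE]
            simp only
            rw [hek, max_eq_left (le_of_lt (hepos k)), Set.indicator_of_mem hmem]
      _ = ENNReal.ofReal (e k) * ν Sk := by
          rw [lintegral_indicator ((measurableSet_singleton (e k)).preimage
            (measurable_pi_apply k))]
          simp [mul_comm]
          rfl
      _ = ENNReal.ofReal (e k) * p k := by
          rw [hSk, hν, pi_eval_preimage μ k _ (measurableSet_singleton _), hμsingleton]
      _ ≤ 1 := le_of_eq (by
          rw [hp, ← ENNReal.ofReal_mul (le_of_lt (hepos k)),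
            mul_inv_cancel₀ (ne_of_gt (hepos k)), ENNReal.ofReal_one])
  have hmain := hint (Fin K → ℝ) ν inferInstance E hEmeas hEnn hindep hexp
  -- lower bound the lintegral by the value at e times the mass at e
  have hEe : (fun k => E k e) = e := by
    funext k
    rw [hE]
    simp only
    exact max_eq_left (le_of_lt (hepos k))
  have hsingle : ν ({e} : Set (Fin K → ℝ)) = ∏ k, p k := by
    rw [hν, ← Set.univ_pi_singleton e, Measure.pi_pi]
    exact Finset.prod_congr rfl fun k _ => hμsingleton k
  have hlow : ENNReal.ofReal (F e) * ∏ k, p k ≤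
      ∫⁻ ω, ENNReal.ofReal (F (fun k => E k ω)) ∂ν := by
    have hind : ∀ ω, Set.indicator ({e} : Set (Fin K → ℝ))
        (fun _ => ENNReal.ofReal (F e)) ω ≤ ENNReal.ofReal (F (fun k => E k ω)) := by
      intro ω
      by_cases hω : ω ∈ ({e} : Set (Fin K → ℝ))
      · rw [Set.indicator_of_mem hω]
        rw [Set.mem_singleton_iff] at hω
        subst hω
        rw [hEe]
      · rw [Set.indicator_of_notMem hω]
        exact zero_le
    calc ENNReal.ofReal (F e) * ∏ k, p k
        = ∫⁻ ω, Set.indicator ({e} : Set (Fin K → ℝ))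
            (fun _ => ENNReal.ofReal (F e)) ω ∂ν := by
          rw [lintegral_indicator (measurableSet_singleton e)]
          simp [hsingle]
      _ ≤ _ := lintegral_mono hind
  have hkey : ENNReal.ofReal (F e) * ∏ k, p k ≤ 1 := le_trans hlow hmain
  -- convert to real inequality
  have hP : (0:ℝ) < ∏ k, e k := Finset.prod_pos fun k _ => hepos k
  have hprod : (∏ k, p k) = ENNReal.ofReal (∏ k, e k)⁻¹ := by
    rw [hp]
    rw [← ENNReal.ofReal_prod_of_nonneg (fun k _ => inv_nonneg.2 (le_of_lt (hepos k)))]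
    congr 1
    rw [← Finset.prod_inv_distrib]
  rw [hprod, ← ENNReal.ofReal_mul (hpos e), ENNReal.ofReal_le_one] at hkey
  have : F e * (∏ k, e k)⁻¹ ≤ 1 := hkey
  calc F e = F e * (∏ k, e k)⁻¹ * (∏ k, e k) := by
        field_simp
    _ ≤ 1 * (∏ k, e k) := by
        exact mul_le_mul_of_nonneg_right this (le_of_lt hP)
    _ = ∏ k, e k := one_mul _
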